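/- Let ℓ : X × Y → ℝ^d be biaffine with X ⊆ ℝ^n, Y ⊆ ℝ^m convex and compact, and let S ⊆ ℝ^d be a closed convex set. If S is response-satisfiable (for every y ∈ Y there exists x_y ∈ X with ℓ(x_y, y) ∈ S), then S is halfspace-satisfiable (for every closed halfspace H ⊇ S there exists x* ∈ X with ℓ(x*, y) ∈ H for all y ∈ Y). -/

import Mathlib

lemma affine_on_centerMass {E : Type*} [AddCommGroup E] [Module ℝ E]
    {X : Set E} (hX : Convex ℝ X) {g : E → ℝ}
    (hg : ∀ a b : ℝ, 0 ≤ a → 0 ≤ b → a + b = 1 → ∀ x₁ ∈ X, ∀ x₂ ∈ X,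
      g (a • x₁ + b • x₂) = a * g x₁ + b * g x₂)
    {ι : Type*} (t : Finset ι) (w : ι → ℝ) (p : ι → E)
    (h0 : ∀ i ∈ t, 0 ≤ w i) (h1 : 0 < ∑ i ∈ t, w i) (hp : ∀ i ∈ t, p i ∈ X) :
    g (t.centerMass w p) = t.centerMass w (g ∘ p) := by
  have hcv : ConvexOn ℝ X g :=
    ⟨hX, fun x hx y hy a b ha hb hab =>
      le_of_eq (by rw [hg a b ha hb hab x hx y hy]; simp [smul_eq_mul])⟩
  have hcc : ConcaveOn ℝ X g :=
    ⟨hX, fun x hx y hy a b ha hb hab =>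
      ge_of_eq (by rw [hg a b ha hb hab x hx y hy]; simp [smul_eq_mul])⟩
  exact le_antisymm (hcv.map_centerMass_le h0 h1 hp) (hcc.le_map_centerMass h0 h1 hp)

lemma affine_on_comb {E : Type*} [AddCommGroup E] [Module ℝ E]
    {X : Set E} (hX : Convex ℝ X) {g : E → ℝ}
    (hg : ∀ a b : ℝ, 0 ≤ a → 0 ≤ b → a + b = 1 → ∀ x₁ ∈ X, ∀ x₂ ∈ X,
      g (a • x₁ + b • x₂) = a * g x₁ + b * g x₂)
    {x₀ : E} (hx₀ : x₀ ∈ X)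
    {ι : Type*} (s : Finset ι) (w : ι → ℝ) (p : ι → E)
    (hp : ∀ i ∈ s, p i ∈ X)
    (hmem : x₀ + ∑ i ∈ s, w i • (p i - x₀) ∈ X) :
    g (x₀ + ∑ i ∈ s, w i • (p i - x₀)) = g x₀ + ∑ i ∈ s, w i * (g (p i) - g x₀) := by
  classical
  set x : E := x₀ + ∑ i ∈ s, w i • (p i - x₀) with hxdef
  set P : ℝ := ∑ i ∈ s, (if 0 ≤ w i then w i else 0) with hP
  set N : ℝ := ∑ i ∈ s, (if 0 ≤ w i then 0 else -w i) with hN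
  have hP0 : 0 ≤ P := Finset.sum_nonneg fun i _ => by split_ifs with h; exacts [h, le_rfl]
  have hN0 : 0 ≤ N := Finset.sum_nonneg fun i _ => by
    split_ifs with h; exacts [le_rfl, by linarith [lt_of_not_ge h]]
  have hW : ∑ i ∈ s, w i = P - N := by
    rw [hP, hN, ← Finset.sum_sub_distrib]
    exact Finset.sum_congr rfl fun i _ => by split_ifs <;> ring
  -- the two-points-extended family
  set q : ι ⊕ Bool → E := Sum.elim p (fun b => if b then x else x₀) with hq
  set wL : ι ⊕ Bool → ℝ :=
    Sum.elim (fun i => if 0 ≤ w i then 0 else -w i) (fun b => if b then 1 else P) with hwL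
  set wR : ι ⊕ Bool → ℝ :=
    Sum.elim (fun i => if 0 ≤ w i then w i else 0) (fun b => if b then 0 else 1 + N) with hwR
  set t : Finset (ι ⊕ Bool) := s.disjSum Finset.univ with ht
  have hqX : ∀ j ∈ t, q j ∈ X := by
    rintro (i | b) hj
    · exact hp i (Finset.inl_mem_disjSum.1 hj)
    · by_cases hb : b <;> simp [hq, hb, hmem, hx₀, ← hxdef]
  have hwL0 : ∀ j ∈ t, 0 ≤ wL j := by
    rintro (i | b) hj
    · simp only [hwL, Sum.elim_inl]; split_ifs with h
      · exact le_rfl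
      · linarith [lt_of_not_ge h]
    · by_cases hb : b <;> simp [hwL, hb, hP0]
  have hwR0 : ∀ j ∈ t, 0 ≤ wR j := by
    rintro (i | b) hj
    · simp only [hwR, Sum.elim_inr]; simp only [Sum.elim_inl]; split_ifs with h
      exacts [h, le_rfl]
    · by_cases hb : b <;> simp [hwR, hb] <;> linarith
  have hSL : ∑ j ∈ t, wL j = N + (1 + P) := by
    rw [ht, hwL, Finset.sum_sumElim]
    simp [hN]
  have hSR : ∑ j ∈ t, wR j = P + (1 + N) := by
    rw [ht, hwR, Finset.sum_sumElim]
    simp [hP]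
  have hSLR : ∑ j ∈ t, wL j = ∑ j ∈ t, wR j := by rw [hSL, hSR]; ring
  have hTpos : 0 < ∑ j ∈ t, wL j := by rw [hSL]; linarith
  -- equality of weighted sums of points
  have key : (∑ i ∈ s, (if 0 ≤ w i then w i else 0) • p i)
      - ∑ i ∈ s, (if 0 ≤ w i then 0 else -w i) • p i = ∑ i ∈ s, w i • p i := by
    rw [← Finset.sum_sub_distrib]
    refine Finset.sum_congr rfl fun i _ => ?_
    split_ifs <;> simp [neg_smul] <;> module
  have hsum_smul : ∑ i ∈ s, w i • (p i - x₀) = (∑ i ∈ s, w i • p i) - (∑ i ∈ s, w i) • x₀ := by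
    rw [Finset.sum_smul, ← Finset.sum_sub_distrib]
    exact Finset.sum_congr rfl fun i _ => by module
  have key' : ∑ i ∈ s, (if 0 ≤ w i then 0 else -w i) • p i
      = (∑ i ∈ s, (if 0 ≤ w i then w i else 0) • p i) - ∑ i ∈ s, w i • p i := by
    rw [← key]; abel
  have hx' : x = x₀ + ((∑ i ∈ s, w i • p i) - (P - N) • x₀) := by
    rw [hxdef, hsum_smul, hW]
  have hvec : ∑ j ∈ t, wL j • q j = ∑ j ∈ t, wR j • q j := by
    rw [ht, Finset.sum_disjSum, Finset.sum_disjSum]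
    simp only [hwL, hwR, hq, Sum.elim_inl, Sum.elim_inr, Fintype.sum_bool,
      Bool.false_eq_true, if_true, if_false]
    rw [key', hx']
    module
  have hcmL := affine_on_centerMass hX hg t wL q hwL0 hTpos hqX
  have hcmR := affine_on_centerMass hX hg t wR q hwR0 (hSLR ▸ hTpos) hqX
  have hcmeq : t.centerMass wL q = t.centerMass wR q := by
    rw [Finset.centerMass, Finset.centerMass, hvec, hSLR]
  have hsums : ∑ j ∈ t, wL j • (g ∘ q) j = ∑ j ∈ t, wR j • (g ∘ q) j := by
    have h2 : t.centerMass wL (g ∘ q) = t.centerMass wR (g ∘ q) := by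
      rw [← hcmL, ← hcmR, hcmeq]
    rw [Finset.centerMass, Finset.centerMass, ← hSLR, smul_eq_mul, smul_eq_mul] at h2
    exact mul_left_cancel₀ (inv_ne_zero (ne_of_gt hTpos)) h2
  -- expand and conclude
  rw [ht, Finset.sum_disjSum, Finset.sum_disjSum] at hsums
  simp only [hwL, hwR, hq, Sum.elim_inl, Sum.elim_inr, Function.comp_apply, Fintype.sum_bool,
    Bool.false_eq_true, if_true, if_false, smul_eq_mul] at hsums
  have keyg : (∑ i ∈ s, (if 0 ≤ w i then w i else 0) * g (p i))
      - ∑ i ∈ s, (if 0 ≤ w i then 0 else -w i) * g (p i) = ∑ i ∈ s, w i * g (p i) := by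
    rw [← Finset.sum_sub_distrib]
    refine Finset.sum_congr rfl fun i _ => ?_
    split_ifs <;> ring
  have hgoal : ∑ i ∈ s, w i * (g (p i) - g x₀)
      = ∑ i ∈ s, w i * g (p i) - (P - N) * g x₀ := by
    rw [← hW, Finset.sum_mul, ← Finset.sum_sub_distrib]
    exact Finset.sum_congr rfl fun i _ => by ring
  rw [hgoal]
  linarith [hsums, keyg]

lemma exists_cont_extension {k : ℕ} {X : Set (Fin k → ℝ)} (hX : Convex ℝ X)
    {x₀ : Fin k → ℝ} (hx₀ : x₀ ∈ X) {g : (Fin k → ℝ) → ℝ}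
    (hg : ∀ a b : ℝ, 0 ≤ a → 0 ≤ b → a + b = 1 → ∀ x₁ ∈ X, ∀ x₂ ∈ X,
      g (a • x₁ + b • x₂) = a * g x₁ + b * g x₂) :
    ∃ h : (Fin k → ℝ) → ℝ, Continuous h ∧ ∀ x ∈ X, h x = g x := by
  classical
  set V : Set (Fin k → ℝ) := (fun x => x - x₀) '' X with hV
  obtain ⟨bs, hbsV, hspan, hli⟩ := exists_linearIndependent ℝ V
  set pick : (Fin k → ℝ) → (Fin k → ℝ) := fun v => if hv : v ∈ V then hv.choose else x₀
    with hpick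
  have pick_memX : ∀ v, pick v ∈ X := by
    intro v
    by_cases hv : v ∈ V
    · simp only [hpick, dif_pos hv]; exact hv.choose_spec.1
    · simp only [hpick, dif_neg hv]; exact hx₀
  have pick_spec : ∀ v ∈ V, pick v - x₀ = v := by
    intro v hv
    simp only [hpick, dif_pos hv]
    exact hv.choose_spec.2
  set bB := Module.Basis.extend (show LinearIndepOn ℝ id bs from hli) with hbB
  set L : (Fin k → ℝ) →ₗ[ℝ] ℝ :=
    bB.constr ℝ (fun v => g (pick (v : Fin k → ℝ)) - g x₀) with hL
  refine ⟨fun z => g x₀ + L (z - x₀), ?_, ?_⟩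
  · exact continuous_const.add
      (L.continuous_of_finiteDimensional.comp (continuous_id.sub continuous_const))
  · intro x hx
    have hxV : x - x₀ ∈ Submodule.span ℝ bs := by
      rw [hspan]; exact Submodule.subset_span ⟨x, hx, rfl⟩
    rw [Submodule.mem_span_set] at hxV
    obtain ⟨cw, hsupp, hsum⟩ := hxV
    have hsum' : ∑ v ∈ cw.support, cw v • v = x - x₀ := hsum
    have hLx : L (x - x₀) = ∑ v ∈ cw.support, cw v * (g (pick v) - g x₀) := by
      rw [← hsum', map_sum]
      refine Finset.sum_congr rfl fun v hv => ?_
      have hvB : v ∈ (show LinearIndepOn ℝ id bs from hli).extend (Set.subset_univ bs) := (show LinearIndepOn ℝ id bs from hli).subset_extend _ (hsupp hv)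
      rw [map_smul]
      have hLv : L v = g (pick v) - g x₀ := by
        have h1 := bB.constr_basis ℝ (fun u => g (pick (u : Fin k → ℝ)) - g x₀) ⟨v, hvB⟩
        rwa [hbB, Module.Basis.extend_apply_self] at h1
      rw [hLv, smul_eq_mul]
    have hpt : x₀ + ∑ v ∈ cw.support, cw v • (pick v - x₀) = x := by
      have : ∀ v ∈ cw.support, cw v • (pick v - x₀) = cw v • v := fun v hv => by
        rw [pick_spec v (hbsV (hsupp hv))]
      rw [Finset.sum_congr rfl this, hsum']
      abel
    have hcomb := affine_on_comb hX hg hx₀ cw.support cw (fun v => pick v)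
      (fun v _ => pick_memX v) (by rw [hpt]; exact hx)
    rw [hpt] at hcomb
    show g x₀ + L (x - x₀) = g x
    rw [hLx, hcomb]

theorem response_satisfiable_implies_halfspace_satisfiable
    (n m d : ℕ) (X : Set (Fin n → ℝ)) (Y : Set (Fin m → ℝ))
    (hXc : Convex ℝ X) (hXcp : IsCompact X) (hXne : X.Nonempty)
    (hYc : Convex ℝ Y) (hYcp : IsCompact Y) (hYne : Y.Nonempty)
    (ℓ : (Fin n → ℝ) → (Fin m → ℝ) → (Fin d → ℝ))
    (hbi1 : ∀ a b : ℝ, 0 ≤ a → 0 ≤ b → a + b = 1 →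
      ∀ x₁ ∈ X, ∀ x₂ ∈ X, ∀ y ∈ Y,
        ℓ (a • x₁ + b • x₂) y = a • ℓ x₁ y + b • ℓ x₂ y)
    (hbi2 : ∀ a b : ℝ, 0 ≤ a → 0 ≤ b → a + b = 1 →
      ∀ x ∈ X, ∀ y₁ ∈ Y, ∀ y₂ ∈ Y,
        ℓ x (a • y₁ + b • y₂) = a • ℓ x y₁ + b • ℓ x y₂)
    (S : Set (Fin d → ℝ)) (hScl : IsClosed S) (hSconv : Convex ℝ S)
    (hresp : ∀ y ∈ Y, ∃ x ∈ X, ℓ x y ∈ S) :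
    ∀ (θ : Fin d → ℝ) (c : ℝ), S ⊆ {z | ∑ i, θ i * z i ≤ c} →
      ∃ x ∈ X, ∀ y ∈ Y, ∑ i, θ i * ℓ x y i ≤ c := by
  classical
  intro θ c hsub
  obtain ⟨x₀, hx₀⟩ := hXne
  set f : (Fin n → ℝ) → (Fin m → ℝ) → ℝ := fun x y => ∑ i, θ i * ℓ x y i with hf
  have hsplit : ∀ (a b : ℝ) (u v : Fin d → ℝ),
      ∑ i, θ i * (a • u + b • v) i = a * (∑ i, θ i * u i) + b * (∑ i, θ i * v i) := by
    intro a b u v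
    rw [Finset.mul_sum, Finset.mul_sum, ← Finset.sum_add_distrib]
    refine Finset.sum_congr rfl fun i _ => ?_
    simp only [Pi.add_apply, Pi.smul_apply, smul_eq_mul]
    ring
  have hf1 : ∀ y ∈ Y, ∀ a b : ℝ, 0 ≤ a → 0 ≤ b → a + b = 1 → ∀ x₁ ∈ X, ∀ x₂ ∈ X,
      f (a • x₁ + b • x₂) y = a * f x₁ y + b * f x₂ y := by
    intro y hy a b ha hb hab x₁ hx₁ x₂ hx₂
    simp only [hf]
    rw [hbi1 a b ha hb hab x₁ hx₁ x₂ hx₂ y hy]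
    exact hsplit a b _ _
  have hf2 : ∀ x ∈ X, ∀ a b : ℝ, 0 ≤ a → 0 ≤ b → a + b = 1 → ∀ y₁ ∈ Y, ∀ y₂ ∈ Y,
      f x (a • y₁ + b • y₂) = a * f x y₁ + b * f x y₂ := by
    intro x hx a b ha hb hab y₁ hy₁ y₂ hy₂
    simp only [hf]
    rw [hbi2 a b ha hb hab x hx y₁ hy₁ y₂ hy₂]
    exact hsplit a b _ _
  -- continuous extensions of f · y
  have hE : ∀ y : Y, ∃ h : (Fin n → ℝ) → ℝ, Continuous h ∧ ∀ x ∈ X, h x = f x y :=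
    fun y => exists_cont_extension hXc hx₀
      (fun a b ha hb hab x₁ hx₁ x₂ hx₂ => hf1 y y.2 a b ha hb hab x₁ hx₁ x₂ hx₂)
  choose H Hcont Hagree using hE
  set Z : Y → Set (Fin n → ℝ) := fun y => X ∩ (H y) ⁻¹' (Set.Iic c) with hZ
  have hZcl : ∀ y : Y, IsClosed (Z y) := fun y =>
    hXcp.isClosed.inter (isClosed_Iic.preimage (Hcont y))
  -- finite intersection property
  have hfin : ∀ u : Finset Y, (X ∩ ⋂ y ∈ u, Z y).Nonempty := by
    intro u
    have claim : ∃ x ∈ X, ∀ j : {y : Y // y ∈ u}, f x ↑↑j ≤ c := by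
      by_contra hcon
      push_neg at hcon
      -- separation setup
      set Φ : (Fin n → ℝ) → ({y : Y // y ∈ u} → ℝ) := fun x j => H ↑j x with hΦ
      have hΦcont : Continuous Φ := continuous_pi fun j => Hcont ↑j
      set K : Set ({y : Y // y ∈ u} → ℝ) := Φ '' X with hK
      have hKcp : IsCompact K := hXcp.image hΦcont
      have hKconv : Convex ℝ K := by
        rintro _ ⟨x₁, hx₁, rfl⟩ _ ⟨x₂, hx₂, rfl⟩ a b ha hb hab
        refine ⟨a • x₁ + b • x₂, hXc hx₁ hx₂ ha hb hab, ?_⟩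
        funext j
        simp only [hΦ, Pi.add_apply, Pi.smul_apply, smul_eq_mul]
        rw [Hagree _ _ (hXc hx₁ hx₂ ha hb hab), Hagree _ _ hx₁, Hagree _ _ hx₂,
          hf1 ↑↑j (↑j : Y).2 a b ha hb hab x₁ hx₁ x₂ hx₂]
      set D : Set ({y : Y // y ∈ u} → ℝ) := ⋂ j, {v | v j ≤ c} with hD
      have hDconv : Convex ℝ D := by
        intro v hv w hw a b ha hb hab
        rw [Set.mem_iInter] at hv hw ⊢
        intro j
        have h1 : v j ≤ c := hv j
        have h2 : w j ≤ c := hw j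
        show (a • v + b • w) j ≤ c
        have h3 : (a • v + b • w) j = a * v j + b * w j := rfl
        have h4 : a * c + b * c = c := by rw [← add_mul, hab, one_mul]
        have h5 := mul_le_mul_of_nonneg_left h1 ha
        have h6 := mul_le_mul_of_nonneg_left h2 hb
        linarith
      have hDcl : IsClosed D :=
        isClosed_iInter fun j => isClosed_le (continuous_apply j) continuous_const
      have hcD : (fun _ => c) ∈ D := Set.mem_iInter.2 fun j => by
        show c ≤ c
        exact le_rfl
      have hdisj : Disjoint K D := by
        rw [Set.disjoint_left]
        rintro _ ⟨x, hxX, rfl⟩ hvD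
        obtain ⟨j, hj⟩ := hcon x hxX
        rw [Set.mem_iInter] at hvD
        have := hvD j
        simp only [Set.mem_setOf_eq, hΦ] at this
        rw [Hagree _ _ hxX] at this
        exact absurd this (not_le.2 hj)
      obtain ⟨φ, r₁, r₂, h₁, h₁₂, h₂⟩ :=
        geometric_hahn_banach_compact_closed hKconv hKcp hDconv hDcl hdisj
      set lam : {y : Y // y ∈ u} → ℝ := fun j => φ (Pi.single j 1) with hlam
      have hrep : ∀ v : {y : Y // y ∈ u} → ℝ, φ v = ∑ j, v j * lam j := by
        intro v
        have hv : ∑ j, v j • (Pi.single j 1 : {y : Y // y ∈ u} → ℝ) = v := by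
          have h7 : ∀ j : {y : Y // y ∈ u}, v j • (Pi.single j 1 : {y : Y // y ∈ u} → ℝ) = Pi.single j (v j) := by
            intro j
            rw [← Pi.single_smul, smul_eq_mul, mul_one]
          rw [Finset.sum_congr rfl fun j _ => h7 j]
          exact Finset.univ_sum_single v
        conv_lhs => rw [← hv]
        rw [map_sum]
        refine Finset.sum_congr rfl fun j _ => ?_
        rw [map_smul, smul_eq_mul]
      have hlam0 : ∀ j, lam j ≤ 0 := by
        intro j
        by_contra hpos
        push_neg at hpos
        have hcr : 0 < φ (fun _ => c) - r₂ := sub_pos.2 (h₂ _ hcD)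
        set M : ℝ := (φ (fun _ => c) - r₂) / lam j + 1 with hM
        have hM0 : 0 < M := by positivity
        have hbD : ((fun _ => c) - M • (Pi.single j 1 : {y : Y // y ∈ u} → ℝ)) ∈ D := by
          refine Set.mem_iInter.2 fun k => ?_
          simp only [Set.mem_setOf_eq, Pi.sub_apply, Pi.smul_apply, smul_eq_mul]
          by_cases hk : k = j
          · subst hk; rw [Pi.single_eq_same]; nlinarith
          · rw [Pi.single_eq_of_ne hk]; simp
        have h3 := h₂ _ hbD
        rw [map_sub, map_smul, smul_eq_mul] at h3
        have h3' : r₂ < (φ fun _ => c) - M * lam j := h3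
        clear h3
        rename' h3' => h3
        have hMl : M * lam j = φ (fun _ => c) - r₂ + lam j := by
          rw [hM]; field_simp
        rw [hMl] at h3
        linarith
      set μ : {y : Y // y ∈ u} → ℝ := fun j => -lam j with hμ
      have hμ0 : ∀ j, 0 ≤ μ j := fun j => neg_nonneg.2 (hlam0 j)
      set M0 : ℝ := ∑ j, μ j with hM0
      have hM0nn : 0 ≤ M0 := Finset.sum_nonneg fun j _ => hμ0 j
      have hM0pos : 0 < M0 := by
        rcases hM0nn.lt_or_eq with h | h
        · exact h
        · exfalso
          have hz : ∀ j, lam j = 0 := by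
            intro j
            have := (Finset.sum_eq_zero_iff_of_nonneg (fun j _ => hμ0 j)).1 h.symm j
              (Finset.mem_univ j)
            simpa [hμ, neg_eq_zero] using this
          have hφ0 : ∀ v, φ v = 0 := fun v => by
            rw [hrep]; exact Finset.sum_eq_zero fun j _ => by rw [hz j, mul_zero]
          have hA := h₁ _ ⟨x₀, hx₀, rfl⟩
          have hB := h₂ _ hcD
          rw [hφ0] at hA hB
          linarith
      set ybar : Fin m → ℝ :=
        Finset.univ.centerMass μ (fun j : {y : Y // y ∈ u} => ((j : Y) : Fin m → ℝ)) with hybar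
      have hybarY : ybar ∈ Y :=
        hYc.centerMass_mem (fun j _ => hμ0 j) (by rw [← hM0]; exact hM0pos)
          (fun j _ => (j : Y).2)
      obtain ⟨x', hx', hSx⟩ := hresp ybar hybarY
      have hle : f x' ybar ≤ c := hsub hSx
      -- f x' ybar as a center of mass
      have hcm : f x' ybar =
          Finset.univ.centerMass μ (fun j : {y : Y // y ∈ u} => f x' ↑↑j) := by
        have := affine_on_centerMass hYc
          (fun a b ha hb hab y₁ hy₁ y₂ hy₂ => hf2 x' hx' a b ha hb hab y₁ hy₁ y₂ hy₂)
          Finset.univ μ (fun j : {y : Y // y ∈ u} => ((j : Y) : Fin m → ℝ))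
          (fun j _ => hμ0 j) (by rw [← hM0]; exact hM0pos) (fun j _ => (j : Y).2)
        rw [hybar, this]
        rfl
      have hΦx' : φ (Φ x') = ∑ j, f x' ↑↑j * lam j := by
        rw [hrep]
        refine Finset.sum_congr rfl fun j _ => ?_
        simp only [hΦ]
        rw [Hagree _ _ hx']
      have hA := h₁ _ ⟨x', hx', rfl⟩
      have hB := h₂ _ hcD
      have hφc : φ (fun _ => c) = -(c * M0) := by
        rw [hrep, hM0, Finset.mul_sum, ← Finset.sum_neg_distrib]
        exact Finset.sum_congr rfl fun j _ => by simp only [hμ]; ring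
      have hSf : c * M0 < ∑ j, μ j * f x' ↑↑j := by
        have : ∑ j, f x' ↑↑j * lam j < -(c * M0) := by
          rw [← hΦx', ← hφc]; linarith
        have hneg : ∑ j, μ j * f x' ↑↑j = -∑ j, f x' ↑↑j * lam j := by
          rw [← Finset.sum_neg_distrib]
          exact Finset.sum_congr rfl fun j _ => by simp only [hμ]; ring
        rw [hneg]
        linarith
      have hgt : c < f x' ybar := by
        rw [hcm, Finset.centerMass, ← hM0, smul_eq_mul]
        have h4 : M0⁻¹ * (c * M0) < M0⁻¹ * ∑ j, μ j • f x' ↑↑j := by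
          refine mul_lt_mul_of_pos_left ?_ (inv_pos.2 hM0pos)
          simpa [smul_eq_mul] using hSf
        rw [show M0⁻¹ * (c * M0) = c by field_simp] at h4
        exact h4
      linarith
    obtain ⟨x, hxX, hx⟩ := claim
    refine ⟨x, hxX, ?_⟩
    rw [Set.mem_iInter₂]
    intro y hy
    refine ⟨hxX, ?_⟩
    show H y x ≤ c
    rw [Hagree _ _ hxX]
    exact hx ⟨y, hy⟩
  obtain ⟨x, hxX, hxZ⟩ := hXcp.inter_iInter_nonempty Z hZcl hfin
  refine ⟨x, hxX, fun y hy => ?_⟩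
  rw [Set.mem_iInter] at hxZ
  have := (hxZ ⟨y, hy⟩).2
  rw [Set.mem_preimage, Set.mem_Iic, Hagree _ _ hxX] at this
  exact this
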